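/- arXiv:1604.01697 — 4 statements merged into one kernel-verified Lean document; each statement's English description precedes it below -/
import Mathlib

section
/- For integers j ≥ 1 and i with j ≤ i ≤ ⌊e·j⌋, we have sum_{r=j}^{i-1} (1 - ln(r/j))/r² ≥ ln(i/j)/i. -/
theorem stmt_3 (j i : ℕ) (hj : 1 ≤ j) (hji : j ≤ i)
    (hi : i ≤ ⌊Real.exp 1 * j⌋₊) :
    Real.log ((i : ℝ) / j) / i ≤
      ∑ r ∈ Finset.Ico j i, (1 - Real.log ((r : ℝ) / j)) / (r : ℝ) ^ 2 := by
  revert hi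
  induction i, hji using Nat.le_induction with
  | base =>
    intro _
    have hjpos : (0:ℝ) < j := by exact_mod_cast hj
    simp [Finset.Ico_self, div_self (ne_of_gt hjpos)]
  | succ i hji IH =>
    intro hi
    have hjR : (1:ℝ) ≤ j := by exact_mod_cast hj
    have hiR : (1:ℝ) ≤ i := by exact_mod_cast hj.trans hji
    have hipos : (0:ℝ) < i := by linarith
    have hjpos : (0:ℝ) < j := by linarith
    have IH' := IH (le_trans (Nat.le_succ i) hi)
    have hub : (i:ℝ) + 1 ≤ Real.exp 1 * j := by
      have h1 := Nat.floor_le (show (0:ℝ) ≤ Real.exp 1 * j by positivity)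
      have h2 : ((i+1 : ℕ) : ℝ) ≤ (⌊Real.exp 1 * j⌋₊ : ℝ) := by exact_mod_cast hi
      push_cast at h2; linarith
    have hL : Real.log ((i:ℝ)/j) ≤ 1 := by
      have : (i:ℝ)/j ≤ Real.exp 1 := by
        rw [div_le_iff₀ hjpos]; linarith
      calc Real.log ((i:ℝ)/j) ≤ Real.log (Real.exp 1) :=
            Real.log_le_log (by positivity) this
        _ = 1 := Real.log_exp 1
    have hlog : Real.log (((i:ℝ)+1)/j) ≤ Real.log ((i:ℝ)/j) + 1/i := by
      have heq : ((i:ℝ)+1)/j = ((i:ℝ)/j) * (((i:ℝ)+1)/i) := by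
        field_simp
      rw [heq, Real.log_mul (by positivity) (by positivity)]
      have h := Real.log_le_sub_one_of_pos (show (0:ℝ) < ((i:ℝ)+1)/i by positivity)
      have h2 : ((i:ℝ)+1)/i - 1 = 1/i := by field_simp; ring
      linarith
    rw [Finset.sum_Ico_succ_top hji]
    set L := Real.log ((i:ℝ)/j) with hLdef
    have key : Real.log (((i:ℝ)+1)/j) / ((i:ℝ)+1) ≤ L/i + (1-L)/(i:ℝ)^2 := by
      have h1 : Real.log (((i:ℝ)+1)/j) / ((i:ℝ)+1) ≤ (L + 1/i)/((i:ℝ)+1) := by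
        gcongr
      have h2 : (L + 1/(i:ℝ))/((i:ℝ)+1) ≤ L/i + (1-L)/(i:ℝ)^2 := by
        rw [div_add_div _ _ (ne_of_gt hipos) (by positivity),
          div_le_div_iff₀ (by positivity) (by positivity)]
        have h3 : (1/(i:ℝ)) * ((i:ℝ) * (i:ℝ)^2) = (i:ℝ)^2 := by field_simp
        nlinarith [mul_nonneg hipos.le (by linarith : (0:ℝ) ≤ 1 - L), h3]
      linarith
    push_cast
    linarith [key, IH']
end

section
/- For every positive integer j, sum_{r=j}^{⌊e·j⌋} (1 - ln(r/j))/r² ≥ 1/(e·j). -/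
open Real Finset intervalIntegral in
theorem stmt_4 (j : ℕ) (hj : 0 < j) :
    1 / (Real.exp 1 * j) ≤
      ∑ r ∈ Finset.Icc j ⌊Real.exp 1 * j⌋₊,
        (1 - Real.log ((r : ℝ) / j)) / (r : ℝ) ^ 2 := by
  set E : ℝ := Real.exp 1 with hE
  set N : ℕ := ⌊E * j⌋₊ with hN
  set g : ℝ → ℝ := fun x => (1 - (Real.log x - Real.log j)) / x ^ 2 with hg
  set F : ℝ → ℝ := fun x => (Real.log x - Real.log j) / x with hF
  have hjR : (0:ℝ) < j := by exact_mod_cast hj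
  have hE1 : (1:ℝ) < E := by
    rw [hE]; calc (1:ℝ) < 2 := one_lt_two
    _ < Real.exp 1 := by have := Real.exp_one_gt_d9; linarith
  have hEj : (j:ℝ) ≤ E * j := le_mul_of_one_le_left hjR.le hE1.le
  have hEjpos : (0:ℝ) < E * j := lt_of_lt_of_le hjR hEj
  have hjN : j ≤ N := Nat.le_floor hEj
  have hNEj : (N:ℝ) ≤ E * j := Nat.floor_le hEjpos.le
  have hEjN1 : E * j < N + 1 := Nat.lt_floor_add_one _
  have hNpos : (0:ℝ) < N := lt_of_lt_of_le hjR (by exact_mod_cast hjN)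
  have hlogEj : Real.log (E * j) = 1 + Real.log j := by
    rw [Real.log_mul (by positivity) hjR.ne', hE, Real.log_exp]
  -- derivative
  have hderiv : ∀ x : ℝ, 0 < x → HasDerivAt F (g x) x := by
    intro x hx
    have h1 : HasDerivAt (fun x : ℝ => Real.log x - Real.log j) x⁻¹ x :=
      (Real.hasDerivAt_log hx.ne').sub_const _
    have h2 : HasDerivAt (fun x : ℝ => x) 1 x := hasDerivAt_id x
    have := h1.div h2 hx.ne'
    convert this using 1
    show (1 - (Real.log x - Real.log j)) / x ^ 2 = _; rw [inv_mul_cancel₀ hx.ne', mul_one]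
    all_goals rfl
  -- continuity / integrability
  have hcont : ContinuousOn g {x : ℝ | 0 < x} := by
    apply ContinuousOn.div
    · exact continuousOn_const.sub ((Real.continuousOn_log.mono (fun x hx => ne_of_gt hx)).sub
        continuousOn_const)
    · exact (continuous_pow 2).continuousOn
    · exact fun x hx => pow_ne_zero 2 (ne_of_gt hx)
  have hint : ∀ a b : ℝ, 0 < a → 0 < b → IntervalIntegrable g MeasureTheory.volume a b := by
    intro a b ha hb
    apply (hcont.mono ?_).intervalIntegrable
    intro x hx
    rcases Set.mem_uIcc.1 hx with h | h
    · exact lt_of_lt_of_le ha h.1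
    · exact lt_of_lt_of_le hb h.1
  -- fundamental theorem
  have hFTC : ∀ a b : ℝ, 0 < a → 0 < b → a ≤ b → ∫ x in a..b, g x = F b - F a := by
    intro a b ha hb hab
    apply integral_eq_sub_of_hasDerivAt
    · intro x hx
      rw [Set.uIcc_of_le hab] at hx
      exact hderiv x (lt_of_lt_of_le ha hx.1)
    · exact hint a b ha hb
  -- antitone on [j, E*j]
  have hanti : AntitoneOn g (Set.Icc (j:ℝ) (E * j)) := by
    intro x hx y hy hxy
    have hx0 : (0:ℝ) < x := lt_of_lt_of_le hjR hx.1
    have hy0 : (0:ℝ) < y := lt_of_lt_of_le hjR hy.1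
    have hny : 0 ≤ 1 - (Real.log y - Real.log j) := by
      have : Real.log y ≤ Real.log (E * j) := Real.log_le_log hy0 hy.2
      rw [hlogEj] at this; linarith
    have hnx : 1 - (Real.log y - Real.log j) ≤ 1 - (Real.log x - Real.log j) := by
      have : Real.log x ≤ Real.log y := Real.log_le_log hx0 hxy
      linarith
    simp only [hg]
    apply div_le_div₀ (by linarith) hnx (by positivity)
    exact pow_le_pow_left₀ hx0.le hxy 2
  -- g N ≥ 0
  have hgN : 0 ≤ g N := by
    have : Real.log N ≤ Real.log (E * j) := Real.log_le_log hNpos hNEj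
    rw [hlogEj] at this
    apply div_nonneg (by linarith) (by positivity)
  -- sum bound over Ico j N
  have hsum1 : (∫ x in (j:ℝ)..(N:ℝ), g x) ≤ ∑ r ∈ Finset.Ico j N, g r := by
    apply AntitoneOn.integral_le_sum_Ico hjN
    exact hanti.mono (Set.Icc_subset_Icc le_rfl hNEj)
  -- tail integral bound
  have htail : (∫ x in (N:ℝ)..(E * j), g x) ≤ g N := by
    have h1 : (∫ x in (N:ℝ)..(E * j), g x) ≤ ∫ _ in (N:ℝ)..(E * j), g N := by
      apply integral_mono_on hNEj (hint _ _ hNpos hEjpos) intervalIntegrable_const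
      intro x hx
      exact hanti ⟨by exact_mod_cast hjN, hNEj⟩
        ⟨le_trans (by exact_mod_cast hjN) hx.1, hx.2⟩ hx.1
    rw [integral_const, smul_eq_mul] at h1
    calc (∫ x in (N:ℝ)..(E * j), g x) ≤ (E * j - N) * g N := h1
      _ ≤ 1 * g N := by apply mul_le_mul_of_nonneg_right (by linarith) hgN
      _ = g N := one_mul _
  -- combine
  have hsplit : (∫ x in (j:ℝ)..(E * j), g x) =
      (∫ x in (j:ℝ)..(N:ℝ), g x) + ∫ x in (N:ℝ)..(E * j), g x :=
    (integral_add_adjacent_intervals (hint _ _ hjR hNpos) (hint _ _ hNpos hEjpos)).symm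
  have hval : (∫ x in (j:ℝ)..(E * j), g x) = 1 / (E * j) := by
    rw [hFTC _ _ hjR hEjpos hEj, hF]
    simp only [hlogEj, sub_self, zero_div, sub_zero]
    ring_nf
  have hsumeq : ∑ r ∈ Finset.Icc j N, (1 - Real.log ((r : ℝ) / j)) / (r : ℝ) ^ 2 =
      (∑ r ∈ Finset.Ico j N, g r) + g N := by
    rw [← Finset.Ico_add_one_right_eq_Icc, Finset.sum_Ico_succ_top hjN]
    congr 1
    · apply Finset.sum_congr rfl
      intro r hr
      have hr0 : (0:ℝ) < r := lt_of_lt_of_le hjR (by exact_mod_cast (Finset.mem_Ico.1 hr).1)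
      rw [hg]
      simp only [Real.log_div hr0.ne' hjR.ne']
    · rw [hg]
      simp only [Real.log_div hNpos.ne' hjR.ne']
  rw [hsumeq]
  calc 1 / (E * j) = (∫ x in (j:ℝ)..(N:ℝ), g x) + ∫ x in (N:ℝ)..(E * j), g x := by
        rw [← hsplit, hval]
    _ ≤ (∑ r ∈ Finset.Ico j N, g r) + g N := add_le_add hsum1 htail
end

section
/- For every positive integer j, sum_{r=j}^{⌊e·j⌋} (1 - ln(r/j))/r² ≤ 1/(e·j) + 1/j². -/
theorem stmt_5 (j : ℕ) (hj : 0 < j) :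
    ∑ r ∈ Finset.Icc j ⌊Real.exp 1 * j⌋₊,
        (1 - Real.log ((r : ℝ) / j)) / (r : ℝ) ^ 2 ≤
      1 / (Real.exp 1 * j) + 1 / (j : ℝ) ^ 2 := by
  set N := ⌊Real.exp 1 * j⌋₊ with hN
  have hjR : (0:ℝ) < j := by exact_mod_cast hj
  have he1 : (1:ℝ) ≤ Real.exp 1 := by
    have := Real.add_one_le_exp (1:ℝ); linarith
  have hjN : j ≤ N := by
    apply Nat.le_floor
    nlinarith
  have hNle : (N:ℝ) ≤ Real.exp 1 * j := Nat.floor_le (by positivity)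
  have hNpos : (0:ℝ) < N := lt_of_lt_of_le hjR (by exact_mod_cast hjN)
  -- the function and its antiderivative
  set g : ℝ → ℝ := fun x => (1 - (Real.log x - Real.log j)) / x ^ 2 with hg
  set F : ℝ → ℝ := fun x => (Real.log x - Real.log j) / x with hF
  -- rewrite the sum using g
  have hsum : ∑ r ∈ Finset.Icc j N, (1 - Real.log ((r : ℝ) / j)) / (r : ℝ) ^ 2
      = ∑ r ∈ Finset.Icc j N, g (r : ℝ) := by
    apply Finset.sum_congr rfl
    intro r hr
    have hr1 : j ≤ r := (Finset.mem_Icc.mp hr).1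
    have hrpos : (0:ℝ) < r := lt_of_lt_of_le hjR (by exact_mod_cast hr1)
    rw [hg]
    rw [Real.log_div (ne_of_gt hrpos) (ne_of_gt hjR)]
  rw [hsum]
  -- split off the first term
  have hsplit : Finset.Icc j N = insert j (Finset.Icc (j+1) N) := by
    ext x; simp only [Finset.mem_Icc, Finset.mem_insert]; omega
  rw [hsplit, Finset.sum_insert (by simp)]
  have hterm : g (j:ℝ) = 1 / (j:ℝ)^2 := by
    rw [hg]; simp
  rw [hterm]
  rw [add_comm (1 / (Real.exp 1 * j)) _]
  apply add_le_add_right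
  -- antitone of g on [j, e*j]
  have hanti : AntitoneOn g (Set.Icc (j:ℝ) N) := by
    intro x hx y hy hxy
    obtain ⟨hx1, hx2⟩ := hx
    obtain ⟨hy1, hy2⟩ := hy
    have hxpos : (0:ℝ) < x := lt_of_lt_of_le hjR hx1
    have hypos : (0:ℝ) < y := lt_of_lt_of_le hjR hy1
    have hlogy : Real.log y ≤ 1 + Real.log j := by
      have : Real.log y ≤ Real.log (Real.exp 1 * j) :=
        Real.log_le_log hypos (le_trans hy2 hNle)
      rwa [Real.log_mul (by positivity) (ne_of_gt hjR), Real.log_exp] at this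
    have hlogxy : Real.log x ≤ Real.log y := Real.log_le_log hxpos hxy
    rw [hg]
    apply div_le_div₀ (by linarith) (by linarith) (by positivity)
    nlinarith
  -- sum ≤ integral
  have hkey : ∑ i ∈ Finset.Ico j N, g ((i:ℕ) + 1 : ℕ) ≤ ∫ x in (j:ℝ)..(N:ℝ), g x :=
    AntitoneOn.sum_le_integral_Ico hjN hanti
  -- reindex
  have hreindex : ∑ r ∈ Finset.Icc (j+1) N, g (r:ℝ) = ∑ i ∈ Finset.Ico j N, g ((i:ℕ) + 1 : ℕ) := by
    rw [← Finset.Ico_add_one_right_eq_Icc]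
    rw [← Finset.map_add_right_Ico j N 1, Finset.sum_map]
    rfl
  rw [hreindex]
  -- evaluate the integral
  have hderiv : ∀ x ∈ Set.uIcc (j:ℝ) (N:ℝ), HasDerivAt F (g x) x := by
    intro x hx
    rw [Set.uIcc_of_le (by exact_mod_cast hjN)] at hx
    have hxpos : (0:ℝ) < x := lt_of_lt_of_le hjR hx.1
    have h1 : HasDerivAt (fun y => Real.log y - Real.log j) x⁻¹ x :=
      (Real.hasDerivAt_log (ne_of_gt hxpos)).sub_const _
    have h2 : HasDerivAt (fun y : ℝ => y) 1 x := hasDerivAt_id x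
    have := h1.div h2 (ne_of_gt hxpos)
    convert this using 1
    · rfl
    · rfl
    · rfl
    rw [hg]
    field_simp
  have hcont : ContinuousOn g (Set.uIcc (j:ℝ) (N:ℝ)) := by
    rw [Set.uIcc_of_le (by exact_mod_cast hjN)]
    apply ContinuousOn.div
    · exact continuousOn_const.sub ((Real.continuousOn_log.mono (by
        intro x hx
        simp only [Set.mem_compl_iff, Set.mem_singleton_iff]
        have := hx.1
        intro h; rw [h] at this; linarith)).sub continuousOn_const)
    · fun_prop
    · intro x hx
      have hxpos : (0:ℝ) < x := lt_of_lt_of_le hjR hx.1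
      positivity
  have hint : ∫ x in (j:ℝ)..(N:ℝ), g x = F (N:ℝ) - F (j:ℝ) := by
    apply intervalIntegral.integral_eq_sub_of_hasDerivAt
    · intro x hx; exact hderiv x hx
    · exact hcont.intervalIntegrable
  have hFj : F (j:ℝ) = 0 := by rw [hF]; simp
  have hFN : F (N:ℝ) ≤ 1 / (Real.exp 1 * j) := by
    rw [hF]
    have hlog : Real.log (N:ℝ) - Real.log j ≤ (N:ℝ) / (Real.exp 1 * j) := by
      have h := Real.log_le_sub_one_of_pos (show (0:ℝ) < (N:ℝ) / (Real.exp 1 * j) by positivity)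
      rw [Real.log_div (ne_of_gt hNpos) (by positivity), Real.log_mul (by positivity) (ne_of_gt hjR),
        Real.log_exp] at h
      linarith
    calc (Real.log (N:ℝ) - Real.log j) / (N:ℝ) ≤ ((N:ℝ) / (Real.exp 1 * j)) / (N:ℝ) := by
          apply div_le_div_of_nonneg_right hlog hNpos.le |>.trans_eq rfl
      _ = 1 / (Real.exp 1 * j) := by field_simp
  calc ∑ i ∈ Finset.Ico j N, g ((i:ℕ) + 1 : ℕ) ≤ ∫ x in (j:ℝ)..(N:ℝ), g x := hkey
    _ = F (N:ℝ) - F (j:ℝ) := hint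
    _ ≤ 1 / (Real.exp 1 * j) := by rw [hFj]; linarith
end

section
/- Let 0 < ε < 1, and let n be a positive integer. Define z_r = 1/(r(r+1)) and w_r = e·(1-ε)·ln((r+1)/r) for r ≤ ε·n (and w_r = 0 otherwise). Then for all integers 1 ≤ k ≤ i ≤ ε·n: (i+1)·sum_{r=k}^n z_r - sum_{r=k}^i w_r ≥ 0. -/
lemma tele_aux (f : ℕ → ℝ) : ∀ n k : ℕ, k ≤ n + 1 →
    ∑ r ∈ Finset.Icc k n, (f r - f (r + 1)) = f k - f (n + 1) := by
  intro n
  induction n with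
  | zero =>
    intro k hk
    interval_cases k
    · simp
    · simp
  | succ m ih =>
    intro k hk
    rcases Nat.lt_or_ge k (m + 2) with h | h
    · have hk' : k ≤ m + 1 := Nat.lt_succ_iff.mp h
      rw [Finset.sum_Icc_succ_top hk', ih k hk']
      ring
    · have : k = m + 2 := le_antisymm hk h
      subst this
      simp [Finset.Icc_eq_empty_of_lt (by omega : m + 1 < m + 2)]

theorem stmt_16 (ε : ℝ) (hε0 : 0 < ε) (hε1 : ε < 1)
    (n : ℕ) (hn : 0 < n)
    (z w : ℕ → ℝ)
    (hz : ∀ r : ℕ, z r = 1 / ((r : ℝ) * ((r : ℝ) + 1)))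
    (hw : ∀ r : ℕ, w r =
      if (r : ℝ) ≤ ε * n then Real.exp 1 * (1 - ε) * Real.log (((r : ℝ) + 1) / r)
      else 0) :
    ∀ k i : ℕ, 1 ≤ k → k ≤ i → (i : ℝ) ≤ ε * n →
      ((i : ℝ) + 1) * (∑ r ∈ Finset.Icc k n, z r) -
        (∑ r ∈ Finset.Icc k i, w r) ≥ 0 := by
  intro k i hk hki hiεn
  have hn' : (0:ℝ) < n := by exact_mod_cast hn
  have hkn : k ≤ n + 1 := by
    by_contra h
    push_neg at h
    have h2 : n + 1 ≤ i := by omega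
    have h3 : (n : ℝ) + 1 ≤ (i : ℝ) := by exact_mod_cast h2
    nlinarith
  -- sum of z
  have hzsum : ∑ r ∈ Finset.Icc k n, z r = 1 / (k : ℝ) - 1 / ((n : ℝ) + 1) := by
    have ht := tele_aux (fun r => 1 / (r : ℝ)) n k hkn
    beta_reduce at ht
    push_cast at ht
    rw [← ht]
    apply Finset.sum_congr rfl
    intro r hr
    have hr1 : 1 ≤ r := le_trans hk (Finset.mem_Icc.mp hr).1
    have hr0 : (0:ℝ) < r := by exact_mod_cast hr1
    rw [hz r]
    field_simp
    ring
  -- sum of w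
  have hwsum : ∑ r ∈ Finset.Icc k i, w r =
      Real.exp 1 * (1 - ε) * (Real.log ((i : ℝ) + 1) - Real.log (k : ℝ)) := by
    have ht := tele_aux (fun r => -(Real.exp 1 * (1 - ε) * Real.log (r : ℝ))) i k
      (le_trans hki (Nat.le_succ i))
    beta_reduce at ht
    push_cast at ht
    have heq : ∑ r ∈ Finset.Icc k i, w r = ∑ r ∈ Finset.Icc k i,
        (-(Real.exp 1 * (1 - ε) * Real.log (r : ℝ)) -
          -(Real.exp 1 * (1 - ε) * Real.log ((r : ℝ) + 1))) := by
      apply Finset.sum_congr rfl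
      intro r hr
      obtain ⟨hr1, hr2⟩ := Finset.mem_Icc.mp hr
      have hrle : (r : ℝ) ≤ ε * n := le_trans (by exact_mod_cast hr2) hiεn
      have hr0 : (0:ℝ) < r := by exact_mod_cast le_trans hk hr1
      rw [hw r, if_pos hrle,
        Real.log_div (by positivity) (ne_of_gt hr0)]
      ring
    rw [heq, ht]
    ring
  rw [hzsum, hwsum]
  have hK1 : (1:ℝ) ≤ (k:ℝ) := by exact_mod_cast hk
  have hK0 : (0:ℝ) < (k:ℝ) := by linarith
  have hki' : (k : ℝ) ≤ (i : ℝ) := by exact_mod_cast hki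
  set K : ℝ := (k : ℝ) with hK
  set I : ℝ := (i : ℝ) + 1 with hI
  have hKI : K < I := by rw [hI]; linarith
  have hI0 : (0:ℝ) < I := by linarith
  have hlog : Real.log I - Real.log K = Real.log (I / K) :=
    (Real.log_div (ne_of_gt hI0) (ne_of_gt hK0)).symm
  rw [hlog]
  set x : ℝ := I / K with hx
  have hx1 : (1:ℝ) ≤ x := (le_div_iff₀ hK0).mpr (by linarith)
  have hx0 : (0:ℝ) < x := by linarith
  have hlogx0 : 0 ≤ Real.log x := Real.log_nonneg hx1
  have he : (0:ℝ) < Real.exp 1 := Real.exp_pos 1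
  -- e * log x ≤ x
  have hkey : Real.exp 1 * Real.log x ≤ x := by
    have h1 : Real.log (x / Real.exp 1) ≤ x / Real.exp 1 - 1 :=
      Real.log_le_sub_one_of_pos (by positivity)
    rw [Real.log_div (ne_of_gt hx0) (ne_of_gt he), Real.log_exp] at h1
    have h2' : Real.log x ≤ x / Real.exp 1 := by linarith
    have := (le_div_iff₀ he).mp h2'
    linarith
  have h2 : Real.exp 1 * (1 - ε) * Real.log x ≤ (1 - ε) * x := by
    have h1ε : (0:ℝ) < 1 - ε := by linarith
    nlinarith
  have hn1 : (0:ℝ) < (n : ℝ) + 1 := by positivity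
  have hKεn : K ≤ ε * ((n : ℝ) + 1) := by nlinarith
  have hεK : 1 / ((n : ℝ) + 1) ≤ ε / K := by
    rw [div_le_div_iff₀ hn1 hK0]
    linarith
  have h3 : (1 - ε) * x ≤ I * (1 / K - 1 / ((n : ℝ) + 1)) := by
    have h4 : I * (1 / K - 1 / ((n : ℝ) + 1)) - (1 - ε) * x =
        I * (ε / K - 1 / ((n : ℝ) + 1)) := by
      rw [hx]
      field_simp
      ring
    nlinarith [mul_nonneg hI0.le (sub_nonneg.mpr hεK)]
  linarith
end
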